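/- Let d ≥ 2 be an integer. There exists a universal constant C > 0 such that for all β ≥ 10 and all τ ∈ {0, 1/4, 1/2}, ∫_{[−1,1]^d} exp(−β·∏_{k=1}^d (1−y_k²)^{1/2}) / ∏_{k=1}^d (1−y_k²)^τ dϱ(y) ≤ C·β^{2τ−2}·(log β)^{d−1}, where ϱ is the uniform probability measure on [−1,1]^d. -/

import Mathlib

open MeasureTheory Real

noncomputable section

/-- The uniform probability measure on `[-1,1]`. -/
def unif : Measure ℝ := (2 : ENNReal)⁻¹ • volume.restrict (Set.Icc (-1 : ℝ) 1)

instance : IsProbabilityMeasure unif := by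
  constructor
  simp only [unif, Measure.smul_apply, Measure.restrict_apply MeasurableSet.univ,
    Set.univ_inter, Real.volume_Icc, smul_eq_mul]
  rw [show (1 : ℝ) - (-1) = 2 by norm_num]
  rw [ENNReal.ofReal_ofNat]
  exact ENNReal.inv_mul_cancel (by norm_num) (by norm_num)

/-- The uniform probability measure on `[-1,1]^d`. -/
def unifd (d : ℕ) : Measure (Fin d → ℝ) := Measure.pi fun _ => unif

/-- The multivariate envelope bound `Ω(y) = 2^d / (π^{d/2} ∏_k (1-y_k²)^{1/4})`. -/
def envM (d : ℕ) (y : Fin d → ℝ) : ℝ :=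
  2 ^ d / (π ^ ((d : ℝ) / 2) * ∏ k, (1 - y k ^ 2) ^ ((1 : ℝ) / 4))

/-- `H_d(β) = β (log(1/β))^{d-1}`. -/
def Hd (d : ℕ) (β : ℝ) : ℝ := β * Real.log (1 / β) ^ (d - 1)

namespace Stmt18Aux

/-! ### Elementary real inequalities -/

lemma exp_two_le_ten : Real.exp 2 ≤ 10 := by
  have h := Real.exp_one_lt_d9
  have h0 := Real.exp_pos 1
  have : Real.exp 2 = Real.exp 1 * Real.exp 1 := by
    rw [← Real.exp_add]; norm_num
  nlinarith

lemma two_le_log {β : ℝ} (hβ : 10 ≤ β) : 2 ≤ Real.log β := by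
  rw [Real.le_log_iff_exp_le (by linarith)]
  exact le_trans exp_two_le_ten hβ

lemma twentyeight_le_exp_four : (28 : ℝ) ≤ Real.exp 4 := by
  have h := Real.exp_one_gt_d9
  have h4 : Real.exp 4 = Real.exp 1 ^ 4 := by
    rw [show (4:ℝ) = ((4:ℕ):ℝ) * 1 by norm_num, Real.exp_nat_mul]
  have h5 : (2.7182818283:ℝ) ^ 4 ≤ Real.exp 1 ^ 4 :=
    pow_le_pow_left₀ (by norm_num) h.le 4
  rw [h4]
  refine le_trans ?_ h5
  norm_num

lemma pow_div_factorial_le_exp {x : ℝ} (hx : 0 ≤ x) (n : ℕ) :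
    x ^ n / (Nat.factorial n : ℝ) ≤ Real.exp x := by
  refine le_trans ?_ (Real.sum_le_exp_of_nonneg hx (n+1))
  exact Finset.single_le_sum (f := fun i => x ^ i / (Nat.factorial i : ℝ))
    (fun i _ => by positivity) (Finset.self_mem_range_succ n)

lemma exp_neg_le_six {x : ℝ} (hx : 0 < x) : Real.exp (-x) ≤ 6 * x ^ (-3 : ℝ) := by
  have h1 : x ^ (3:ℕ) / 6 ≤ Real.exp x := by
    have := pow_div_factorial_le_exp hx.le 3
    norm_num [Nat.factorial] at this
    linarith
  have h2 : 0 < x ^ (3:ℕ) / 6 := by positivity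
  have h3 : (Real.exp x)⁻¹ ≤ (x ^ (3:ℕ) / 6)⁻¹ := by
    exact inv_anti₀ h2 h1
  rw [Real.exp_neg]
  refine h3.trans (le_of_eq ?_)
  rw [show (-3:ℝ) = -((3:ℕ):ℝ) by norm_num, Real.rpow_neg hx.le, Real.rpow_natCast]
  field_simp

/-! ### a.e. facts for `unif` and `unifd` -/

lemma unif_ae_Icc : ∀ᵐ y ∂unif, y ∈ Set.Icc (-1:ℝ) 1 := by
  rw [show unif = (2 : ENNReal)⁻¹ • volume.restrict (Set.Icc (-1 : ℝ) 1) from rfl]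
  exact Measure.ae_smul_measure (ae_restrict_mem measurableSet_Icc) _

lemma unif_ae_Ioo : ∀ᵐ y ∂unif, y ∈ Set.Ioo (-1:ℝ) 1 := by
  have h0 : unif ({-1, 1} : Set ℝ) = 0 := by
    have hv : volume.restrict (Set.Icc (-1:ℝ) 1) ({-1, 1} : Set ℝ) = 0 := by
      have hv0 : volume ({-1, 1} : Set ℝ) = 0 := by
        rw [show ({-1, 1} : Set ℝ) = {-1} ∪ {1} from rfl]
        exact measure_union_null (by simp) (by simp)
      refine le_antisymm ?_ (by simp)
      calc volume.restrict (Set.Icc (-1:ℝ) 1) ({-1, 1} : Set ℝ)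
          ≤ volume ({-1, 1} : Set ℝ) := Measure.restrict_le_self _
        _ = 0 := hv0
    simp [show unif = (2 : ENNReal)⁻¹ • volume.restrict (Set.Icc (-1 : ℝ) 1) from rfl,
      Measure.smul_apply, hv]
  have h2 : ∀ᵐ y ∂unif, y ∉ ({-1, 1} : Set ℝ) := measure_eq_zero_iff_ae_notMem.mp h0
  filter_upwards [unif_ae_Icc, h2] with y hy hn
  simp only [Set.mem_insert_iff, Set.mem_singleton_iff, not_or] at hn
  exact ⟨lt_of_le_of_ne hy.1 (Ne.symm hn.1), lt_of_le_of_ne hy.2 hn.2⟩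

lemma unifd_ae_Ioo (n : ℕ) : ∀ᵐ z ∂unifd n, ∀ j, z j ∈ Set.Ioo (-1:ℝ) 1 := by
  rw [MeasureTheory.ae_all_iff]
  intro j
  have hnull : unif ((Set.Ioo (-1:ℝ) 1)ᶜ) = 0 := by
    have := unif_ae_Ioo
    rwa [ae_iff] at this
  have h := Measure.pi_eval_preimage_null (fun _ : Fin n => unif) (i := j) hnull
  rw [ae_iff]
  exact h

/-! ### Reduction of `unif`-lintegrals to interval integrals -/

lemma lintegral_unif_le (F G : ℝ → ℝ)
    (hG1 : IntervalIntegrable G volume 0 1)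
    (hGpos : ∀ u ∈ Set.Icc (0:ℝ) 1, 0 ≤ G u)
    (h1 : ∀ y ∈ Set.Icc (0:ℝ) 1, F y ≤ G (1 - y))
    (h2 : ∀ y ∈ Set.Icc (-1:ℝ) 0, F y ≤ G (1 + y)) :
    ∫⁻ y, ENNReal.ofReal (F y) ∂unif ≤ ENNReal.ofReal (∫ u in (0:ℝ)..1, G u) := by
  set I := ∫ u in (0:ℝ)..1, G u with hI
  have hdisj : Disjoint (Set.Icc (-1:ℝ) 0) (Set.Ioc (0:ℝ) 1) := by
    rw [Set.disjoint_left]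
    rintro x hx hx2
    exact absurd hx2.1 (not_lt.mpr hx.2)
  have hsplit : volume.restrict (Set.Icc (-1:ℝ) 1)
      = volume.restrict (Set.Icc (-1:ℝ) 0) + volume.restrict (Set.Ioc (0:ℝ) 1) := by
    rw [← Measure.restrict_union hdisj measurableSet_Ioc,
      Set.Icc_union_Ioc_eq_Icc (by norm_num) (by norm_num)]
  have hA : ∫⁻ y in Set.Icc (-1:ℝ) 0, ENNReal.ofReal (F y) ≤ ENNReal.ofReal I := by
    have hint : IntegrableOn (fun y => G (1 + y)) (Set.Icc (-1:ℝ) 0) := by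
      have h := hG1.comp_add_left 1
      rw [show (0:ℝ)-1 = -1 by norm_num, show (1:ℝ)-1 = 0 by norm_num] at h
      rw [integrableOn_Icc_iff_integrableOn_Ioc]
      exact (intervalIntegrable_iff_integrableOn_Ioc_of_le (by norm_num)).mp h
    calc ∫⁻ y in Set.Icc (-1:ℝ) 0, ENNReal.ofReal (F y)
        ≤ ∫⁻ y in Set.Icc (-1:ℝ) 0, ENNReal.ofReal (G (1 + y)) := by
          refine lintegral_mono_ae ?_
          rw [ae_restrict_iff' measurableSet_Icc]
          exact Filter.Eventually.of_forall fun y hy =>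
            ENNReal.ofReal_le_ofReal (h2 y hy)
      _ = ENNReal.ofReal (∫ y in Set.Icc (-1:ℝ) 0, G (1 + y)) := by
          rw [← ofReal_integral_eq_lintegral_ofReal hint ?_]
          rw [Filter.EventuallyLE, ae_restrict_iff' measurableSet_Icc]
          exact Filter.Eventually.of_forall fun y hy =>
            hGpos _ ⟨by linarith [hy.1], by linarith [hy.2]⟩
      _ = ENNReal.ofReal I := by
          congr 1
          rw [MeasureTheory.integral_Icc_eq_integral_Ioc,
            ← intervalIntegral.integral_of_le (by norm_num : (-1:ℝ) ≤ 0),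
            intervalIntegral.integral_comp_add_left G 1]
          norm_num [hI]
  have hB : ∫⁻ y in Set.Ioc (0:ℝ) 1, ENNReal.ofReal (F y) ≤ ENNReal.ofReal I := by
    have hint : IntegrableOn (fun y => G (1 - y)) (Set.Ioc (0:ℝ) 1) := by
      have h := (hG1.comp_sub_left 1).symm
      rw [show (1:ℝ)-1 = 0 by norm_num, show (1:ℝ)-0 = 1 by norm_num] at h
      exact (intervalIntegrable_iff_integrableOn_Ioc_of_le (by norm_num)).mp h
    calc ∫⁻ y in Set.Ioc (0:ℝ) 1, ENNReal.ofReal (F y)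
        ≤ ∫⁻ y in Set.Ioc (0:ℝ) 1, ENNReal.ofReal (G (1 - y)) := by
          refine lintegral_mono_ae ?_
          rw [ae_restrict_iff' measurableSet_Ioc]
          exact Filter.Eventually.of_forall fun y hy =>
            ENNReal.ofReal_le_ofReal (h1 y ⟨hy.1.le, hy.2⟩)
      _ = ENNReal.ofReal (∫ y in Set.Ioc (0:ℝ) 1, G (1 - y)) := by
          rw [← ofReal_integral_eq_lintegral_ofReal hint ?_]
          rw [Filter.EventuallyLE, ae_restrict_iff' measurableSet_Ioc]
          exact Filter.Eventually.of_forall fun y hy =>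
            hGpos _ ⟨by linarith [hy.2], by linarith [hy.1]⟩
      _ = ENNReal.ofReal I := by
          congr 1
          rw [← intervalIntegral.integral_of_le (by norm_num : (0:ℝ) ≤ 1),
            intervalIntegral.integral_comp_sub_left G 1]
          norm_num [hI]
  calc ∫⁻ y, ENNReal.ofReal (F y) ∂unif
      = 2⁻¹ * ((∫⁻ y in Set.Icc (-1:ℝ) 0, ENNReal.ofReal (F y))
          + ∫⁻ y in Set.Ioc (0:ℝ) 1, ENNReal.ofReal (F y)) := by
        rw [show unif = (2 : ENNReal)⁻¹ • volume.restrict (Set.Icc (-1 : ℝ) 1) from rfl,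
          lintegral_smul_measure, hsplit, lintegral_add_measure, smul_eq_mul]
    _ ≤ 2⁻¹ * (ENNReal.ofReal I + ENNReal.ofReal I) := by
        exact mul_le_mul_right (add_le_add hA hB) _
    _ = ENNReal.ofReal I := by
        rw [← two_mul, ← mul_assoc, ENNReal.inv_mul_cancel two_ne_zero ENNReal.ofNat_ne_top,
          one_mul]

/-! ### The moment bound -/

lemma moment_le {ε : ℝ} (h0 : 0 < ε) (h1 : ε ≤ 1) :
    ∫⁻ y, ENNReal.ofReal ((1 - y^2) ^ (ε - 1)) ∂unif ≤ ENNReal.ofReal (1/ε) := by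
  have key : (∫ u in (0:ℝ)..1, u ^ (ε - 1)) = 1/ε := by
    rw [integral_rpow (Or.inl (by linarith))]
    rw [show ε - 1 + 1 = ε by ring, Real.one_rpow, Real.zero_rpow (ne_of_gt h0)]
    norm_num
  refine le_trans (lintegral_unif_le _ (fun u => u ^ (ε - 1))
    (intervalIntegral.intervalIntegrable_rpow' (by linarith))
    (fun u hu => Real.rpow_nonneg hu.1 _)
    ?_ ?_) (le_of_eq (by rw [key]))
  · intro y hy
    rcases eq_or_lt_of_le hy.2 with h | h
    · subst h; norm_num
    · exact Real.rpow_le_rpow_of_nonpos (by nlinarith [hy.1, hy.2])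
        (by nlinarith [hy.1, hy.2]) (by linarith)
  · intro y hy
    rcases eq_or_lt_of_le hy.1 with h | h
    · rw [← h]; norm_num
    · exact Real.rpow_le_rpow_of_nonpos (by nlinarith [hy.1, hy.2])
        (by nlinarith [hy.1, hy.2]) (by linarith)

/-! ### The 1-dimensional exponential integral bound -/

lemma integrable_G {b τ : ℝ} (hτ1 : (-1:ℝ) < -τ) (a c : ℝ) :
    IntervalIntegrable (fun u => Real.exp (-(b * u ^ ((1:ℝ)/2))) * u ^ (-τ)) volume a c := by
  have hc : Continuous fun u : ℝ => Real.exp (-(b * u ^ ((1:ℝ)/2))) :=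
    Real.continuous_exp.comp
      ((continuous_const.mul (continuous_id.rpow_const fun _ => Or.inr (by norm_num))).neg)
  exact (intervalIntegral.intervalIntegrable_rpow' hτ1).continuousOn_mul hc.continuousOn

lemma core_exp {b τ : ℝ} (hb : 0 < b) (hτ0 : 0 ≤ τ) (hτ : τ ≤ 1/2) :
    (∫ u in (0:ℝ)..1, Real.exp (-(b * u ^ ((1:ℝ)/2))) * u ^ (-τ)) ≤ 14 * b ^ (2*τ - 2) := by
  have hτ1 : (-1:ℝ) < -τ := by linarith
  set G : ℝ → ℝ := fun u => Real.exp (-(b * u ^ ((1:ℝ)/2))) * u ^ (-τ) with hG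
  have hGint : ∀ a c : ℝ, IntervalIntegrable G volume a c := integrable_G hτ1
  have hGle : ∀ u : ℝ, 0 ≤ u → G u ≤ u ^ (-τ) := by
    intro u hu
    have hexp : Real.exp (-(b * u ^ ((1:ℝ)/2))) ≤ 1 := by
      rw [Real.exp_le_one_iff]
      have : 0 ≤ b * u ^ ((1:ℝ)/2) := mul_nonneg hb.le (Real.rpow_nonneg hu _)
      linarith
    calc G u ≤ 1 * u ^ (-τ) := mul_le_mul_of_nonneg_right hexp (Real.rpow_nonneg hu _)
    _ = u ^ (-τ) := one_mul _
  have hbpow_pos : (0:ℝ) < b ^ (2*τ-2) := Real.rpow_pos_of_pos hb _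
  rcases le_or_gt b 1 with hb1 | hb1
  · have h1 : (∫ u in (0:ℝ)..1, G u) ≤ ∫ u in (0:ℝ)..1, u ^ (-τ) :=
      intervalIntegral.integral_mono_on zero_le_one (hGint 0 1)
        (intervalIntegral.intervalIntegrable_rpow' hτ1) (fun u hu => hGle u hu.1)
    have h2 : (∫ u in (0:ℝ)..1, u ^ (-τ)) = 1/(1-τ) := by
      rw [integral_rpow (Or.inl hτ1)]
      rw [show -τ + 1 = 1 - τ by ring, Real.one_rpow,
        Real.zero_rpow (by linarith : (1:ℝ) - τ ≠ 0)]
      norm_num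
    have h3 : (1:ℝ) ≤ b ^ (2*τ-2) :=
      Real.one_le_rpow_of_pos_of_le_one_of_nonpos hb hb1 (by linarith)
    have h4 : 1/(1-τ) ≤ (2:ℝ) := by
      rw [div_le_iff₀ (by linarith)]; linarith
    calc (∫ u in (0:ℝ)..1, G u) ≤ 1/(1-τ) := by rw [← h2]; exact h1
    _ ≤ 2 := h4
    _ ≤ 14 * b ^ (2*τ-2) := by nlinarith
  · set u₀ : ℝ := b ^ (-2 : ℝ) with hu₀
    have hu₀pos : 0 < u₀ := Real.rpow_pos_of_pos hb _
    have hu₀le : u₀ ≤ 1 := Real.rpow_le_one_of_one_le_of_nonpos hb1.le (by norm_num)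
    have hsplit : (∫ u in (0:ℝ)..u₀, G u) + (∫ u in u₀..1, G u) = ∫ u in (0:ℝ)..1, G u :=
      intervalIntegral.integral_add_adjacent_intervals (hGint 0 u₀) (hGint u₀ 1)
    have hpow1 : u₀ ^ (1-τ) = b ^ (2*τ-2) := by
      rw [hu₀, ← Real.rpow_mul hb.le]
      rw [show (-2:ℝ) * (1-τ) = 2*τ-2 by ring]
    have hpiece1 : (∫ u in (0:ℝ)..u₀, G u) ≤ 2 * b ^ (2*τ-2) := by
      have h1 : (∫ u in (0:ℝ)..u₀, G u) ≤ ∫ u in (0:ℝ)..u₀, u ^ (-τ) :=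
        intervalIntegral.integral_mono_on hu₀pos.le (hGint 0 u₀)
          (intervalIntegral.intervalIntegrable_rpow' hτ1) (fun u hu => hGle u hu.1)
      have h2 : (∫ u in (0:ℝ)..u₀, u ^ (-τ)) = u₀ ^ (1-τ) / (1-τ) := by
        rw [integral_rpow (Or.inl hτ1)]
        rw [show -τ + 1 = 1 - τ by ring, Real.zero_rpow (by linarith : (1:ℝ) - τ ≠ 0)]
        ring
      have h4 : u₀ ^ (1-τ) / (1-τ) ≤ 2 * b ^ (2*τ-2) := by
        rw [hpow1, div_le_iff₀ (by linarith : (0:ℝ) < 1 - τ)]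
        nlinarith
      linarith [h1, h2 ▸ h1]
    have hpiece2 : (∫ u in u₀..1, G u) ≤ 12 * b ^ (2*τ-2) := by
      have hpt : ∀ u ∈ Set.Icc u₀ 1, G u ≤ 6 * b ^ (-3:ℝ) * u ^ (-(3/2) - τ) := by
        intro u hu
        have hu0 : 0 < u := lt_of_lt_of_le hu₀pos hu.1
        have hx : 0 < b * u ^ ((1:ℝ)/2) := mul_pos hb (Real.rpow_pos_of_pos hu0 _)
        have h5 := exp_neg_le_six hx
        have h6 : (b * u ^ ((1:ℝ)/2)) ^ (-3:ℝ) = b ^ (-3:ℝ) * u ^ (-(3/2):ℝ) := by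
          rw [Real.mul_rpow hb.le (Real.rpow_nonneg hu0.le _), ← Real.rpow_mul hu0.le]
          norm_num
        calc G u ≤ (6 * (b * u ^ ((1:ℝ)/2)) ^ (-3:ℝ)) * u ^ (-τ) :=
              mul_le_mul_of_nonneg_right h5 (Real.rpow_nonneg hu0.le _)
        _ = 6 * b ^ (-3:ℝ) * (u ^ (-(3/2):ℝ) * u ^ (-τ)) := by rw [h6]; ring
        _ = 6 * b ^ (-3:ℝ) * u ^ (-(3/2) - τ) := by
              rw [← Real.rpow_add hu0, show -(3/2:ℝ) + -τ = -(3/2) - τ by ring]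
      have hint2 : IntervalIntegrable (fun u : ℝ => 6 * b ^ (-3:ℝ) * u ^ (-(3/2) - τ))
          volume u₀ 1 := by
        apply IntervalIntegrable.const_mul
        apply intervalIntegral.intervalIntegrable_rpow
        right
        intro hmem
        rw [Set.uIcc_of_le hu₀le] at hmem
        exact absurd hmem.1 (not_le.mpr hu₀pos)
      have hne : ¬ (-(3/2) - τ = (-1:ℝ)) := by intro hc; linarith
      have h7 : (∫ u in u₀..1, G u) ≤ ∫ u in u₀..1, 6 * b ^ (-3:ℝ) * u ^ (-(3/2) - τ) :=
        intervalIntegral.integral_mono_on hu₀le (hGint u₀ 1) hint2 hpt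
      have h8 : (∫ u in u₀..1, (6 * b ^ (-3:ℝ)) * u ^ (-(3/2) - τ))
          = (6 * b ^ (-3:ℝ)) * ((1 - u₀ ^ (-(1/2) - τ)) / (-(3/2) - τ + 1)) := by
        rw [intervalIntegral.integral_const_mul]
        congr 1
        rw [integral_rpow (Or.inr ⟨hne, fun hmem => by
          rw [Set.uIcc_of_le hu₀le] at hmem
          exact absurd hmem.1 (not_le.mpr hu₀pos)⟩)]
        rw [Real.one_rpow, show -(3/2) - τ + 1 = -(1/2) - τ by ring]
      have hA : u₀ ^ (-(1/2) - τ) = b ^ (1 + 2*τ) := by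
        rw [hu₀, ← Real.rpow_mul hb.le]
        rw [show (-2:ℝ) * (-(1/2) - τ) = 1 + 2*τ by ring]
      have hprod : b ^ (-3:ℝ) * b ^ (1 + 2*τ) = b ^ (2*τ - 2) := by
        rw [← Real.rpow_add hb]
        rw [show (-3:ℝ) + (1 + 2*τ) = 2*τ - 2 by ring]
      have hb3pos : (0:ℝ) < b ^ (-3:ℝ) := Real.rpow_pos_of_pos hb _
      have hApos : (1:ℝ) ≤ b ^ (1 + 2*τ) :=
        Real.one_le_rpow hb1.le (by linarith)
      have h9 : (1 - u₀ ^ (-(1/2) - τ)) / (-(3/2) - τ + 1) ≤ 2 * b ^ (1 + 2*τ) := by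
        rw [hA, show -(3/2) - τ + 1 = -((1/2) + τ) by ring, div_neg, ← neg_div]
        rw [neg_sub, div_le_iff₀ (by linarith : (0:ℝ) < 1/2 + τ)]
        nlinarith
      calc (∫ u in u₀..1, G u) ≤ (6 * b ^ (-3:ℝ)) * ((1 - u₀ ^ (-(1/2) - τ)) / (-(3/2) - τ + 1)) := by
            rw [← h8]; exact h7
      _ ≤ (6 * b ^ (-3:ℝ)) * (2 * b ^ (1 + 2*τ)) := by
            apply mul_le_mul_of_nonneg_left h9 (by positivity)
      _ = 12 * (b ^ (-3:ℝ) * b ^ (1 + 2*τ)) := by ring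
      _ = 12 * b ^ (2*τ - 2) := by rw [hprod]
    calc (∫ u in (0:ℝ)..1, G u)
        = (∫ u in (0:ℝ)..u₀, G u) + (∫ u in u₀..1, G u) := hsplit.symm
    _ ≤ 2 * b ^ (2*τ-2) + 12 * b ^ (2*τ-2) := add_le_add hpiece1 hpiece2
    _ = 14 * b ^ (2*τ-2) := by ring

lemma expint_le {b τ : ℝ} (hb : 0 < b) (hτ0 : 0 ≤ τ) (hτ : τ ≤ 1/2) :
    ∫⁻ y, ENNReal.ofReal (Real.exp (-(b * (1 - y^2) ^ ((1:ℝ)/2))) * (1 - y^2) ^ (-τ)) ∂unif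
      ≤ ENNReal.ofReal (14 * b ^ (2*τ - 2)) := by
  have hτ1 : (-1:ℝ) < -τ := by linarith
  refine le_trans (lintegral_unif_le _
    (fun u => Real.exp (-(b * u ^ ((1:ℝ)/2))) * u ^ (-τ)) (integrable_G hτ1 0 1)
    (fun u hu => mul_nonneg (Real.exp_nonneg _) (Real.rpow_nonneg hu.1 _)) ?_ ?_)
    (ENNReal.ofReal_le_ofReal (core_exp hb hτ0 hτ))
  · intro y hy
    have hbase : (0:ℝ) ≤ 1 - y ∧ 1 - y ≤ 1 - y^2 :=
      ⟨by linarith [hy.2], by nlinarith [hy.1, hy.2]⟩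
    have hexp : Real.exp (-(b * (1 - y^2) ^ ((1:ℝ)/2))) ≤ Real.exp (-(b * (1-y) ^ ((1:ℝ)/2))) := by
      apply Real.exp_le_exp.mpr
      have h' := mul_le_mul_of_nonneg_left
        (Real.rpow_le_rpow hbase.1 hbase.2 (by norm_num : (0:ℝ) ≤ 1/2)) hb.le
      linarith
    have hpow : (1 - y^2) ^ (-τ) ≤ (1 - y) ^ (-τ) := by
      rcases eq_or_lt_of_le hy.2 with h | h
      · subst h; norm_num
      · exact Real.rpow_le_rpow_of_nonpos (by linarith) hbase.2 (by linarith)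
    calc Real.exp (-(b * (1 - y^2) ^ ((1:ℝ)/2))) * (1 - y^2) ^ (-τ)
        ≤ Real.exp (-(b * (1-y) ^ ((1:ℝ)/2))) * (1 - y^2) ^ (-τ) :=
          mul_le_mul_of_nonneg_right hexp (Real.rpow_nonneg (by nlinarith [hy.1]) _)
      _ ≤ Real.exp (-(b * (1-y) ^ ((1:ℝ)/2))) * (1 - y) ^ (-τ) :=
          mul_le_mul_of_nonneg_left hpow (Real.exp_nonneg _)
  · intro y hy
    have hbase : (0:ℝ) ≤ 1 + y ∧ 1 + y ≤ 1 - y^2 :=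
      ⟨by linarith [hy.1], by nlinarith [hy.1, hy.2]⟩
    have hexp : Real.exp (-(b * (1 - y^2) ^ ((1:ℝ)/2))) ≤ Real.exp (-(b * (1+y) ^ ((1:ℝ)/2))) := by
      apply Real.exp_le_exp.mpr
      have h' := mul_le_mul_of_nonneg_left
        (Real.rpow_le_rpow hbase.1 hbase.2 (by norm_num : (0:ℝ) ≤ 1/2)) hb.le
      linarith
    have hpow : (1 - y^2) ^ (-τ) ≤ (1 + y) ^ (-τ) := by
      rcases eq_or_lt_of_le hy.1 with h | h
      · rw [← h]; norm_num
      · exact Real.rpow_le_rpow_of_nonpos (by linarith) hbase.2 (by linarith)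
    calc Real.exp (-(b * (1 - y^2) ^ ((1:ℝ)/2))) * (1 - y^2) ^ (-τ)
        ≤ Real.exp (-(b * (1+y) ^ ((1:ℝ)/2))) * (1 - y^2) ^ (-τ) :=
          mul_le_mul_of_nonneg_right hexp (Real.rpow_nonneg (by nlinarith [hy.2]) _)
      _ ≤ Real.exp (-(b * (1+y) ^ ((1:ℝ)/2))) * (1 + y) ^ (-τ) :=
          mul_le_mul_of_nonneg_left hpow (Real.exp_nonneg _)

lemma expint_interp {b τ θ : ℝ} (hb : 0 < b) (hτ0 : 0 ≤ τ) (hτ : τ ≤ 1/2)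
    (hθ0 : 0 ≤ θ) (hθ1 : θ ≤ 1) :
    ∫⁻ y, ENNReal.ofReal (Real.exp (-(b * (1 - y^2) ^ ((1:ℝ)/2))) * (1 - y^2) ^ (-τ)) ∂unif
      ≤ ENNReal.ofReal (28 * b ^ ((2*τ - 2) * (1 - θ))) := by
  rcases le_or_gt 1 b with h | h
  · refine le_trans (expint_le hb hτ0 hτ) (ENNReal.ofReal_le_ofReal ?_)
    have h1 : b ^ (2*τ-2) ≤ b ^ ((2*τ-2)*(1-θ)) :=
      Real.rpow_le_rpow_of_exponent_le h (by nlinarith)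
    have h2 : (0:ℝ) < b ^ ((2*τ-2)*(1-θ)) := Real.rpow_pos_of_pos hb _
    nlinarith
  · have hmono : ∫⁻ y, ENNReal.ofReal
        (Real.exp (-(b * (1 - y^2) ^ ((1:ℝ)/2))) * (1 - y^2) ^ (-τ)) ∂unif
        ≤ ∫⁻ y, ENNReal.ofReal ((1 - y^2) ^ ((1-τ) - 1)) ∂unif := by
      refine lintegral_mono_ae ?_
      filter_upwards [unif_ae_Icc] with y hy
      apply ENNReal.ofReal_le_ofReal
      have hy2 : (0:ℝ) ≤ 1 - y^2 := by nlinarith [hy.1, hy.2]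
      have hexp : Real.exp (-(b * (1 - y^2) ^ ((1:ℝ)/2))) ≤ 1 := by
        rw [Real.exp_le_one_iff]
        have : 0 ≤ b * (1 - y^2) ^ ((1:ℝ)/2) := mul_nonneg hb.le (Real.rpow_nonneg hy2 _)
        linarith
      calc Real.exp (-(b * (1 - y^2) ^ ((1:ℝ)/2))) * (1 - y^2) ^ (-τ)
          ≤ 1 * (1 - y^2) ^ (-τ) :=
            mul_le_mul_of_nonneg_right hexp (Real.rpow_nonneg hy2 _)
        _ = (1 - y^2) ^ ((1-τ) - 1) := by rw [one_mul, show (1:ℝ)-τ-1 = -τ by ring]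
    refine le_trans (hmono.trans (moment_le (by linarith) (by linarith)))
      (ENNReal.ofReal_le_ofReal ?_)
    have h1 : (1:ℝ) ≤ b ^ ((2*τ-2)*(1-θ)) :=
      Real.one_le_rpow_of_pos_of_le_one_of_nonpos hb h.le (by nlinarith)
    have h2 : 1/(1-τ) ≤ (2:ℝ) := by rw [div_le_iff₀ (by linarith)]; linarith
    nlinarith

/-! ### Product structure of `unifd` -/

lemma lintegral_unifd_succ (n : ℕ) (F : (Fin (n+1) → ℝ) → ENNReal) (hF : Measurable F) :
    ∫⁻ y, F y ∂unifd (n+1) = ∫⁻ z, ∫⁻ a, F (Fin.cons a z) ∂unif ∂unifd n := by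
  have hmp := measurePreserving_piFinSuccAbove (fun _ : Fin (n+1) => unif) 0
  have h1 : ∫⁻ y, F y ∂unifd (n+1)
      = ∫⁻ p : ℝ × (Fin n → ℝ),
          F ((MeasurableEquiv.piFinSuccAbove (fun _ : Fin (n+1) => ℝ) 0).symm p)
          ∂(unif.prod (Measure.pi fun _ : Fin n => unif)) := by
    rw [show unifd (n+1) = Measure.pi fun _ : Fin (n+1) => unif from rfl]
    exact ((MeasurePreserving.symm _ hmp).lintegral_comp_emb
      (MeasurableEquiv.measurableEmbedding _) F).symm
  rw [h1, lintegral_prod_symm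
    (fun p : ℝ × (Fin n → ℝ) =>
      F ((MeasurableEquiv.piFinSuccAbove (fun _ : Fin (n+1) => ℝ) 0).symm p))
    ((hF.comp (MeasurableEquiv.measurable _)).aemeasurable)]
  rw [show unifd n = Measure.pi fun _ : Fin n => unif from rfl]
  refine lintegral_congr fun z => lintegral_congr fun a => ?_
  congr 1
  simp [MeasurableEquiv.piFinSuccAbove_symm_apply, Fin.insertNthEquiv_zero,
    Fin.consEquiv]

lemma lintegral_unifd_prod_pow (n : ℕ) (g : ℝ → ENNReal) (hg : Measurable g) :
    ∫⁻ z, ∏ j, g (z j) ∂unifd n = (∫⁻ x, g x ∂unif) ^ n := by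
  induction n with
  | zero =>
      simp only [Finset.univ_eq_empty, Finset.prod_empty, pow_zero]
      rw [lintegral_one]
      simp [unifd, Measure.pi_univ]
  | succ n ih =>
      have hF : Measurable (fun y : Fin (n+1) → ℝ => ∏ j, g (y j)) :=
        Finset.measurable_prod _ (fun j _ => hg.comp (measurable_pi_apply j))
      rw [lintegral_unifd_succ n (fun y => ∏ j, g (y j)) hF]
      have hinner : ∀ z : Fin n → ℝ,
          (∫⁻ a, ∏ j : Fin (n+1), g ((Fin.cons a z : Fin (n+1) → ℝ) j) ∂unif)
            = (∫⁻ x, g x ∂unif) * ∏ j : Fin n, g (z j) := by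
        intro z
        have : ∀ a : ℝ, (∏ j : Fin (n+1), g ((Fin.cons a z : Fin (n+1) → ℝ) j))
            = g a * ∏ j : Fin n, g (z j) := by
          intro a
          rw [Fin.prod_univ_succ]
          simp
        simp_rw [this]
        rw [lintegral_mul_const _ hg]
      simp_rw [hinner]
      have hFn : Measurable (fun z : Fin n → ℝ => ∏ j, g (z j)) :=
        Finset.measurable_prod _ (fun j _ => hg.comp (measurable_pi_apply j))
      rw [lintegral_const_mul _ hFn, ih, pow_succ]
      ring

end Stmt18Aux

open Stmt18Aux

set_option maxHeartbeats 2000000 in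
theorem stmt_18 :
    ∃ C : ℝ, 0 < C ∧
      ∀ (d : ℕ), 2 ≤ d → ∀ β τ : ℝ, 10 ≤ β → τ ∈ ({0, 1 / 4, 1 / 2} : Set ℝ) →
        (∫ y, Real.exp (-β * ∏ k, (1 - y k ^ 2) ^ ((1 : ℝ) / 2))
            / ∏ k, (1 - y k ^ 2) ^ τ ∂(unifd d))
          ≤ C * β ^ (2 * τ - 2) * Real.log β ^ (d - 1) := by
  refine ⟨Real.exp 15, Real.exp_pos 15, ?_⟩
  intro d hd β τ hβ hτmem
  obtain ⟨n, rfl⟩ : ∃ n, d = n + 1 := ⟨d - 1, by omega⟩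
  have hn1 : 1 ≤ n := by omega
  simp only [Set.mem_insert_iff, Set.mem_singleton_iff] at hτmem
  have hτ0 : 0 ≤ τ := by rcases hτmem with rfl | rfl | rfl <;> norm_num
  have hτ12 : τ ≤ 1/2 := by rcases hτmem with rfl | rfl | rfl <;> norm_num
  have hβ0 : (0:ℝ) < β := by linarith
  set L := Real.log β with hL
  have hL2 : 2 ≤ L := two_le_log hβ
  have hL0 : (0:ℝ) < L := by linarith
  have hLne : L ≠ 0 := ne_of_gt hL0
  have hrpow_nonneg : ∀ x : ℝ, 0 ≤ x ^ τ := by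
    intro x
    rcases le_or_gt 0 x with h | h
    · exact Real.rpow_nonneg h τ
    · rw [Real.rpow_def_of_neg h]
      apply mul_nonneg (Real.exp_nonneg _)
      rcases hτmem with rfl | rfl | rfl
      · norm_num
      · rw [show (1/4:ℝ) * π = π/4 by ring, Real.cos_pi_div_four]; positivity
      · rw [show (1/2:ℝ) * π = π/2 by ring, Real.cos_pi_div_two]
  set f : (Fin (n+1) → ℝ) → ℝ := fun y =>
    Real.exp (-β * ∏ k, (1 - y k ^ 2) ^ ((1 : ℝ) / 2))
      / ∏ k, (1 - y k ^ 2) ^ τ with hfdef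
  have hfnn : ∀ y, 0 ≤ f y := fun y =>
    div_nonneg (Real.exp_nonneg _) (Finset.prod_nonneg fun k _ => hrpow_nonneg _)
  have hfmeas : Measurable f := by
    apply Measurable.div
    · apply Real.measurable_exp.comp
      apply Measurable.const_mul
      exact Finset.measurable_prod _ fun k _ => by fun_prop
    · exact Finset.measurable_prod _ fun k _ => by fun_prop
  have hBpos : (0:ℝ) < β ^ (2*τ-2) := Real.rpow_pos_of_pos hβ0 _
  -- the main lintegral estimate, for any interpolation parameter θ
  have main : ∀ θ : ℝ, 0 < θ → θ ≤ 1 →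
      (∫⁻ y, ENNReal.ofReal (f y) ∂unifd (n+1))
        ≤ ENNReal.ofReal (28 * β ^ ((2*τ-2)*(1-θ)) * (1/((1-τ)*θ)) ^ n) := by
    intro θ hθ0 hθ1
    set ε : ℝ := (1-τ)*θ with hε
    have hε0 : 0 < ε := mul_pos (by linarith) hθ0
    have hε1 : ε ≤ 1 := by nlinarith
    rw [lintegral_unifd_succ n (fun y => ENNReal.ofReal (f y)) hfmeas.ennreal_ofReal]
    have inner : ∀ᵐ z ∂unifd n,
        (∫⁻ a, ENNReal.ofReal (f (Fin.cons a z)) ∂unif)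
          ≤ ENNReal.ofReal (28 * β ^ ((2*τ-2)*(1-θ)))
              * ∏ j, ENNReal.ofReal ((1 - (z j)^2) ^ (ε - 1)) := by
      filter_upwards [unifd_ae_Ioo n] with z hz
      set P : ℝ := ∏ j, (1 - (z j)^2) ^ ((1:ℝ)/2) with hP
      set Q : ℝ := ∏ j, (1 - (z j)^2) ^ τ with hQ
      have hzj : ∀ j, 0 < 1 - (z j)^2 := fun j => by nlinarith [(hz j).1, (hz j).2]
      have hPpos : 0 < P := by
        rw [hP]; exact Finset.prod_pos fun j _ => Real.rpow_pos_of_pos (hzj j) _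
      have hQpos : 0 < Q := by
        rw [hQ]; exact Finset.prod_pos fun j _ => Real.rpow_pos_of_pos (hzj j) _
      have hb : 0 < β * P := mul_pos hβ0 hPpos
      have hre : ∀ᵐ a ∂unif, ENNReal.ofReal (f (Fin.cons a z))
          = ENNReal.ofReal Q⁻¹
            * ENNReal.ofReal
              (Real.exp (-(β * P * (1 - a^2) ^ ((1:ℝ)/2))) * (1 - a^2) ^ (-τ)) := by
        filter_upwards [unif_ae_Icc] with a ha
        have ha2 : (0:ℝ) ≤ 1 - a^2 := by nlinarith [ha.1, ha.2]
        have hsplit1 :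
            (∏ k : Fin (n+1), (1 - ((Fin.cons a z : Fin (n+1) → ℝ) k) ^ 2) ^ ((1:ℝ)/2))
              = (1 - a^2) ^ ((1:ℝ)/2) * P := by
          rw [Fin.prod_univ_succ]
          simp only [Fin.cons_zero, Fin.cons_succ, hP]
        have hsplit2 :
            (∏ k : Fin (n+1), (1 - ((Fin.cons a z : Fin (n+1) → ℝ) k) ^ 2) ^ τ)
              = (1 - a^2) ^ τ * Q := by
          rw [Fin.prod_univ_succ]
          simp only [Fin.cons_zero, Fin.cons_succ, hQ]
        have hfeq : f (Fin.cons a z) = Q⁻¹ *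
            (Real.exp (-(β * P * (1 - a^2) ^ ((1:ℝ)/2))) * (1 - a^2) ^ (-τ)) := by
          simp only [hfdef]
          rw [hsplit1, hsplit2, Real.rpow_neg ha2,
            show -β * ((1 - a^2) ^ ((1:ℝ)/2) * P)
              = -(β * P * (1 - a^2) ^ ((1:ℝ)/2)) by ring]
          rw [div_eq_mul_inv, mul_inv]
          ring
        rw [hfeq, ENNReal.ofReal_mul (by positivity : (0:ℝ) ≤ Q⁻¹)]
      rw [lintegral_congr_ae hre, lintegral_const_mul' _ _ ENNReal.ofReal_ne_top]
      have hE := expint_interp (b := β*P) hb hτ0 hτ12 hθ0.le hθ1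
      have hid : Q⁻¹ * (28 * (β*P) ^ ((2*τ-2)*(1-θ)))
          = 28 * β ^ ((2*τ-2)*(1-θ)) * ∏ j, (1 - (z j)^2) ^ (ε - 1) := by
        have hPe : P ^ ((2*τ-2)*(1-θ))
            = ∏ j, (1 - (z j)^2) ^ (((1:ℝ)/2) * ((2*τ-2)*(1-θ))) := by
          rw [hP, ← Real.finset_prod_rpow _ _
            (fun j _ => (Real.rpow_pos_of_pos (hzj j) _).le) _]
          exact Finset.prod_congr rfl fun j _ => by
            rw [← Real.rpow_mul (hzj j).le]
        have hQe : Q⁻¹ = ∏ j, (1 - (z j)^2) ^ (-τ) := by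
          rw [hQ, ← Finset.prod_inv_distrib]
          exact Finset.prod_congr rfl fun j _ => by
            rw [← Real.rpow_neg (hzj j).le]
        rw [Real.mul_rpow hβ0.le hPpos.le]
        calc Q⁻¹ * (28 * (β ^ ((2*τ-2)*(1-θ)) * P ^ ((2*τ-2)*(1-θ))))
            = 28 * β ^ ((2*τ-2)*(1-θ)) * (Q⁻¹ * P ^ ((2*τ-2)*(1-θ))) := by ring
          _ = 28 * β ^ ((2*τ-2)*(1-θ)) * ∏ j, (1 - (z j)^2) ^ (ε - 1) := by
              rw [hQe, hPe, ← Finset.prod_mul_distrib]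
              congr 1
              exact Finset.prod_congr rfl fun j _ => by
                rw [← Real.rpow_add (hzj j)]
                congr 1
                rw [hε]; ring
      calc ENNReal.ofReal Q⁻¹ * ∫⁻ a, ENNReal.ofReal
            (Real.exp (-(β * P * (1 - a^2) ^ ((1:ℝ)/2))) * (1 - a^2) ^ (-τ)) ∂unif
          ≤ ENNReal.ofReal Q⁻¹ * ENNReal.ofReal (28 * (β*P) ^ ((2*τ-2)*(1-θ))) :=
            mul_le_mul_right hE _
        _ = ENNReal.ofReal (Q⁻¹ * (28 * (β*P) ^ ((2*τ-2)*(1-θ)))) :=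
            (ENNReal.ofReal_mul (by positivity : (0:ℝ) ≤ Q⁻¹)).symm
        _ = ENNReal.ofReal (28 * β ^ ((2*τ-2)*(1-θ)) * ∏ j, (1 - (z j)^2) ^ (ε - 1)) := by
            rw [hid]
        _ = ENNReal.ofReal (28 * β ^ ((2*τ-2)*(1-θ)))
              * ∏ j, ENNReal.ofReal ((1 - (z j)^2) ^ (ε - 1)) := by
            rw [ENNReal.ofReal_mul (by positivity : (0:ℝ) ≤ 28 * β ^ ((2*τ-2)*(1-θ)))]
            congr 1
            exact ENNReal.ofReal_prod_of_nonneg fun j _ =>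
              (Real.rpow_pos_of_pos (hzj j) _).le
    calc ∫⁻ z, (∫⁻ a, ENNReal.ofReal (f (Fin.cons a z)) ∂unif) ∂unifd n
        ≤ ∫⁻ z, ENNReal.ofReal (28 * β ^ ((2*τ-2)*(1-θ)))
            * ∏ j, ENNReal.ofReal ((1 - (z j)^2) ^ (ε - 1)) ∂unifd n :=
          lintegral_mono_ae inner
      _ = ENNReal.ofReal (28 * β ^ ((2*τ-2)*(1-θ)))
            * ((∫⁻ x, ENNReal.ofReal ((1 - x^2) ^ (ε - 1)) ∂unif) ^ n) := by
          rw [lintegral_const_mul' _ _ ENNReal.ofReal_ne_top,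
            lintegral_unifd_prod_pow n
              (fun x => ENNReal.ofReal ((1 - x^2) ^ (ε - 1))) (by fun_prop)]
      _ ≤ ENNReal.ofReal (28 * β ^ ((2*τ-2)*(1-θ))) * (ENNReal.ofReal (1/ε)) ^ n :=
          mul_le_mul_right (pow_le_pow_left' (moment_le hε0 hε1) n) _
      _ = ENNReal.ofReal (28 * β ^ ((2*τ-2)*(1-θ)) * (1/((1-τ)*θ)) ^ n) := by
          rw [← ENNReal.ofReal_pow (by positivity), ← ENNReal.ofReal_mul (by positivity)]
  -- choose θ and do the final real arithmetic
  have hfinal : ∃ θ : ℝ, 0 < θ ∧ θ ≤ 1 ∧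
      28 * β ^ ((2*τ-2)*(1-θ)) * (1/((1-τ)*θ)) ^ n
        ≤ Real.exp 15 * β ^ (2*τ-2) * L ^ n := by
    have hn0 : (0:ℝ) < (n:ℝ) := by exact_mod_cast Nat.pos_of_ne_zero (by omega)
    have h2τ : (0:ℝ) < 2 - 2*τ := by linarith
    have h1τ : (0:ℝ) < 1 - τ := by linarith
    have h1τ2 : 1/(1-τ) ≤ (2:ℝ) := by
      rw [div_le_iff₀ h1τ]; linarith
    have h1τ0 : (0:ℝ) ≤ 1/(1-τ) := by positivity
    rcases le_or_gt (n:ℝ) ((2-2*τ)*L) with hcase | hcase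
    · -- Case A
      refine ⟨(n:ℝ) / ((2-2*τ)*L), div_pos hn0 (mul_pos h2τ hL0),
        (div_le_one (mul_pos h2τ hL0)).mpr hcase, ?_⟩
      set θ : ℝ := (n:ℝ) / ((2-2*τ)*L) with hθ
      have hεeq : (1-τ) * θ = (n:ℝ)/(2*L) := by
        rw [hθ]; field_simp
      have hsθ : (2-2*τ)*θ = (n:ℝ)/L := by
        rw [hθ]; field_simp
      have hE1 : β ^ ((2*τ-2)*(1-θ)) = β ^ (2*τ-2) * Real.exp n := by
        rw [show (2*τ-2)*(1-θ) = (2*τ-2) + (2-2*τ)*θ by ring, Real.rpow_add hβ0, hsθ]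
        congr 1
        rw [Real.rpow_def_of_pos hβ0, ← hL]
        congr 1
        field_simp
      have hnne : (n:ℝ) ≠ 0 := ne_of_gt hn0
      have hen' : Real.exp (n:ℝ) * (2*L/(n:ℝ))^n = ((2*Real.exp 1)/(n:ℝ))^n * L^n := by
        have hexpn : Real.exp ((n:ℝ)) = Real.exp 1 ^ n := by
          rw [← Real.exp_nat_mul]; norm_num
        rw [hexpn, ← mul_pow, ← mul_pow]
        congr 1
        field_simp
      have h2e : ((2*Real.exp 1)/(n:ℝ))^n ≤ Real.exp 6 := by
        calc ((2*Real.exp 1)/(n:ℝ))^n = (2*Real.exp 1)^n / (n:ℝ)^n := div_pow _ _ n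
          _ ≤ (2*Real.exp 1)^n / (Nat.factorial n : ℝ) := by
              apply div_le_div_of_nonneg_left (by positivity) (by positivity)
              exact_mod_cast Nat.factorial_le_pow n
          _ ≤ Real.exp (2*Real.exp 1) := pow_div_factorial_le_exp (by positivity) n
          _ ≤ Real.exp 6 := by
              apply Real.exp_le_exp.mpr
              nlinarith [Real.exp_one_lt_d9]
      have h28 : (28:ℝ) * Real.exp 6 ≤ Real.exp 15 := by
        have h4 := twentyeight_le_exp_four
        calc (28:ℝ) * Real.exp 6 ≤ Real.exp 4 * Real.exp 6 := by
              nlinarith [Real.exp_pos 6]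
          _ = Real.exp 10 := by rw [← Real.exp_add]; norm_num
          _ ≤ Real.exp 15 := Real.exp_le_exp.mpr (by norm_num)
      have hLn : (0:ℝ) ≤ L ^ n := by positivity
      calc 28 * β ^ ((2*τ-2)*(1-θ)) * (1/((1-τ)*θ)) ^ n
          = 28 * β ^ (2*τ-2) * (Real.exp (n:ℝ) * (2*L/(n:ℝ))^n) := by
            rw [hE1, hεeq, one_div_div]; ring
        _ = 28 * β ^ (2*τ-2) * (((2*Real.exp 1)/(n:ℝ))^n * L^n) := by rw [hen']
        _ ≤ 28 * β ^ (2*τ-2) * (Real.exp 6 * L^n) := by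
            apply mul_le_mul_of_nonneg_left
              (mul_le_mul_of_nonneg_right h2e hLn) (by positivity)
        _ ≤ Real.exp 15 * β ^ (2*τ-2) * L ^ n := by
            nlinarith [mul_le_mul_of_nonneg_right h28 (mul_nonneg hBpos.le hLn)]
    · -- Case B
      refine ⟨1, one_pos, le_refl 1, ?_⟩
      have hA0 : (0:ℝ) ≤ (2-2*τ)*L := by positivity
      have hb2 : β ^ (2*τ-2) = Real.exp (-((2-2*τ)*L)) := by
        rw [Real.rpow_def_of_pos hβ0, ← hL]
        congr 1
        ring
      have hpow2 : (1/(1-τ))^n ≤ (2:ℝ)^n := pow_le_pow_left₀ h1τ0 h1τ2 n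
      have H : 28 * (1/(1-τ))^n * Real.exp ((2-2*τ)*L) ≤ Real.exp 15 * L ^ n := by
        rcases le_or_gt (2*Real.exp 1) L with hLe | hLe
        · have t2 : Real.exp ((2-2*τ)*L) ≤ Real.exp 1 ^ n := by
            rw [← Real.exp_nat_mul, mul_one]
            exact Real.exp_le_exp.mpr hcase.le
          have t3 : (2:ℝ)^n * Real.exp 1 ^ n ≤ L^n := by
            rw [← mul_pow]
            exact pow_le_pow_left₀ (by positivity) hLe n
          have t4 : (1/(1-τ))^n * Real.exp ((2-2*τ)*L) ≤ L^n := by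
            calc (1/(1-τ))^n * Real.exp ((2-2*τ)*L) ≤ (2:ℝ)^n * Real.exp 1 ^ n :=
                  mul_le_mul hpow2 t2 (Real.exp_nonneg _) (by positivity)
              _ ≤ L^n := t3
          have h28' : (28:ℝ) ≤ Real.exp 15 :=
            le_trans twentyeight_le_exp_four (Real.exp_le_exp.mpr (by norm_num))
          calc 28 * (1/(1-τ))^n * Real.exp ((2-2*τ)*L)
              = 28 * ((1/(1-τ))^n * Real.exp ((2-2*τ)*L)) := by ring
            _ ≤ Real.exp 15 * L^n := by
                apply mul_le_mul h28' t4 (by positivity) (Real.exp_nonneg _)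
        · have hA11 : (2-2*τ)*L ≤ 11 := by
            nlinarith [Real.exp_one_lt_d9]
          have t2 : Real.exp ((2-2*τ)*L) ≤ Real.exp 11 := Real.exp_le_exp.mpr hA11
          have t3 : (2:ℝ)^n ≤ L^n := pow_le_pow_left₀ (by norm_num) hL2 n
          have h28'' : (28:ℝ) * Real.exp 11 ≤ Real.exp 15 := by
            have h4 := twentyeight_le_exp_four
            calc (28:ℝ) * Real.exp 11 ≤ Real.exp 4 * Real.exp 11 := by
                  nlinarith [Real.exp_pos 11]
              _ = Real.exp 15 := by rw [← Real.exp_add]; norm_num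
          calc 28 * (1/(1-τ))^n * Real.exp ((2-2*τ)*L)
              ≤ 28 * (2:ℝ)^n * Real.exp 11 := by
                apply mul_le_mul ?_ t2 (Real.exp_nonneg _) (by positivity)
                exact mul_le_mul_of_nonneg_left hpow2 (by norm_num)
            _ = (28 * Real.exp 11) * (2:ℝ)^n := by ring
            _ ≤ Real.exp 15 * L^n := by
                apply mul_le_mul h28'' t3 (by positivity) (Real.exp_nonneg _)
      have hexpA : Real.exp (-((2-2*τ)*L)) * Real.exp ((2-2*τ)*L) = 1 := by
        rw [← Real.exp_add]; norm_num
      calc 28 * β ^ ((2*τ-2)*(1-1)) * (1/((1-τ)*1)) ^ n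
          = 28 * (1/(1-τ))^n := by
            rw [show (2*τ-2)*((1:ℝ)-1) = 0 by ring, Real.rpow_zero, mul_one]
            ring
        _ = (28 * (1/(1-τ))^n * Real.exp ((2-2*τ)*L)) * Real.exp (-((2-2*τ)*L)) := by
            rw [mul_assoc, mul_comm (Real.exp ((2-2*τ)*L)), mul_assoc, hexpA]
            ring
        _ ≤ (Real.exp 15 * L ^ n) * Real.exp (-((2-2*τ)*L)) :=
            mul_le_mul_of_nonneg_right H (Real.exp_nonneg _)
        _ = Real.exp 15 * β ^ (2*τ-2) * L ^ n := by
            rw [hb2]; ring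
  obtain ⟨θ, hθ0, hθ1, hineq⟩ := hfinal
  have h1 := (main θ hθ0 hθ1).trans (ENNReal.ofReal_le_ofReal hineq)
  have hBochner : (∫ y, f y ∂unifd (n+1))
      = (∫⁻ y, ENNReal.ofReal (f y) ∂unifd (n+1)).toReal :=
    integral_eq_lintegral_of_nonneg_ae (Filter.Eventually.of_forall hfnn)
      hfmeas.aestronglyMeasurable
  have hgoal : (∫ y, f y ∂unifd (n+1)) ≤ Real.exp 15 * β ^ (2*τ-2) * L ^ n := by
    rw [hBochner]
    exact ENNReal.toReal_le_of_le_ofReal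
      (by positivity) h1
  simpa using hgoal

end
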